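/- Tight per-coordinate lower bound (Corollary 4.6): for any L ⊆ {1,…,n} and j ∉ L, f(L∪{j}) ≥ f(L) + (1/(2K_{jj})) · (max{(μ − Kζ^L)_j, 0})². Consequently, if K_{jj} = 1 for all j, then an index j ∉ L maximizing the gradient coordinate (μ − Kζ^L)_j over j ∉ L (the ProtoDash selection) also maximizes this lower bound f(L) + (1/2)(max{(μ − Kζ^L)_j, 0})² on f(L∪{j}) over j ∉ L. -/

import Mathlib

open Finset Matrix

noncomputable section

/-- The objective `l(w) = ⟨μ, w⟩ - (1/2) ⟨w, K w⟩`. -/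
def obj {n : ℕ} (K : Matrix (Fin n) (Fin n) ℝ) (μ : Fin n → ℝ) (w : Fin n → ℝ) : ℝ :=
  μ ⬝ᵥ w - (1 / 2) * (w ⬝ᵥ (K *ᵥ w))

/-- The feasible set `Ω_L = {w : w ≥ 0, w_j = 0 for j ∉ L}`. -/
def feas {n : ℕ} (L : Finset (Fin n)) : Set (Fin n → ℝ) :=
  {w | (∀ j, 0 ≤ w j) ∧ ∀ j ∉ L, w j = 0}

lemma obj_add_single {n : ℕ} (K : Matrix (Fin n) (Fin n) ℝ) (hsymm : K.IsSymm)
    (μ w : Fin n → ℝ) (j : Fin n) (t : ℝ) :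
    obj K μ (w + Pi.single j t) =
      obj K μ w + t * (μ j - (K *ᵥ w) j) - (1/2) * t^2 * K j j := by
  simp only [obj, Matrix.mulVec_add, dotProduct_add, add_dotProduct,
    Matrix.mulVec_single, dotProduct_single, single_dotProduct]
  simp only [Matrix.mulVec, dotProduct, Pi.smul_apply, op_smul_eq_mul, Matrix.col_apply]
  have h : ∑ x, w x * (K x j * t) = t * ∑ x, K j x * w x := by
    rw [Finset.mul_sum]; exact Finset.sum_congr rfl fun x _ => by rw [hsymm.apply]; ring
  rw [h]; ring

/-- Corollary 4.6 (tight per-coordinate lower bound, and ProtoDash maximizes it when the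
kernel is normalized). -/
theorem per_coordinate_lower_bound (n : ℕ) (hn : 1 ≤ n)
    (K : Matrix (Fin n) (Fin n) ℝ) (hsymm : K.IsSymm) (hpd : K.PosDef)
    (μ : Fin n → ℝ)
    (ζ : Finset (Fin n) → Fin n → ℝ)
    (hζ : ∀ L : Finset (Fin n),
      ζ L ∈ feas L ∧ ∀ w ∈ feas L, obj K μ w ≤ obj K μ (ζ L))
    (f : Finset (Fin n) → ℝ) (hf : ∀ L : Finset (Fin n), f L = obj K μ (ζ L))
    (L : Finset (Fin n)) :
    (∀ j ∉ L,
      f (insert j L) ≥ f L + (1 / (2 * K j j)) * (max (μ j - (K *ᵥ ζ L) j) 0) ^ 2) ∧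
    ((∀ j, K j j = 1) → ∀ v ∉ L,
      (∀ j ∉ L, μ j - (K *ᵥ ζ L) j ≤ μ v - (K *ᵥ ζ L) v) →
      ∀ j ∉ L,
        f L + (1 / 2) * (max (μ j - (K *ᵥ ζ L) j) 0) ^ 2
          ≤ f L + (1 / 2) * (max (μ v - (K *ᵥ ζ L) v) 0) ^ 2) := by
  constructor
  · intro j hj
    set g : ℝ := μ j - (K *ᵥ ζ L) j with hg
    have hKjj : 0 < K j j := by
      have hx : (Pi.single j 1 : Fin n → ℝ) ≠ 0 := by
        intro h; have := congrFun h j; simp at this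
      have := hpd.dotProduct_mulVec_pos hx
      simpa [Matrix.mulVec_single, dotProduct, Pi.single_apply] using this
    set t : ℝ := max g 0 / K j j with ht
    have ht0 : 0 ≤ t := div_nonneg (le_max_right _ _) hKjj.le
    set w : Fin n → ℝ := ζ L + Pi.single j t with hw
    have hfeas : w ∈ feas (insert j L) := by
      constructor
      · intro i
        have := (hζ L).1.1 i
        by_cases hij : i = j
        · subst hij; simp [hw, Pi.single_apply]; positivity
        · simpa [hw, Pi.single_apply, hij] using this
      · intro i hi
        have hiL : i ∉ L := fun h => hi (Finset.mem_insert_of_mem h)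
        have hij : i ≠ j := fun h => hi (h ▸ Finset.mem_insert_self j L)
        simp [hw, Pi.single_apply, hij, (hζ L).1.2 i hiL]
    have hle : obj K μ w ≤ obj K μ (ζ (insert j L)) := (hζ (insert j L)).2 w hfeas
    have hval : obj K μ w = obj K μ (ζ L) + (1 / (2 * K j j)) * (max g 0) ^ 2 := by
      rw [hw, obj_add_single K hsymm μ (ζ L) j t, ← hg]
      rcases le_or_gt g 0 with h | h
      · have : max g 0 = 0 := max_eq_right h
        rw [ht, this]; simp
      · have hm : max g 0 = g := max_eq_left h.le
        rw [ht, hm]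
        field_simp
        ring
    rw [hf (insert j L), hf L, ← hval]
    exact hle
  · intro _ v _ hmax j hj
    have h1 : max (μ j - (K *ᵥ ζ L) j) 0 ≤ max (μ v - (K *ᵥ ζ L) v) 0 :=
      max_le_max (hmax j hj) le_rfl
    have h2 : (0:ℝ) ≤ max (μ j - (K *ᵥ ζ L) j) 0 := le_max_right _ _
    have := pow_le_pow_left₀ h2 h1 2
    nlinarith
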